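/- Let f : S¹ → S¹ be a homeomorphism of the circle whose rotation number is irrational, i.e., f admits a lift F : ℝ → ℝ (a homeomorphism with f ∘ P = P ∘ F, where P(t) = e^{2πit}) whose translation number τ(f) = lim_{n→∞} (Fⁿ(t) − t)/n is irrational. Then there is no Borel probability measure μ on S¹ for which f is μ-topologically stable. -/

import Mathlib

open MeasureTheory

/-- `f` is `μ`-topologically stable. -/
def MuTopStable {X : Type*} [MetricSpace X] [MeasurableSpace X]
    (μ : Measure X) (f : X → X) : Prop :=
  ∀ ε > 0, ∃ δ > 0, ∀ g : X → X, Continuous g →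
    (∀ x, dist (f x) (g x) ≤ δ) →
    ∃ (Y : Set X) (hg : Set.MapsTo g Y Y), IsCompact Y ∧
      μ Yᶜ ≤ ENNReal.ofReal ε ∧
      ∃ h : Y → X, Continuous h ∧ (∀ y : Y, dist (h y) (y : X) ≤ ε) ∧
        ∀ y : Y, f (h y) = h ⟨g y, hg y.2⟩

open Filter Topology Set

/-- A continuous integer-valued function on ℝ is constant. -/
lemma cont_int_const {d : ℝ → ℝ} (hc : Continuous d) (hi : ∀ t, ∃ m : ℤ, d t = m) (t : ℝ) :
    d t = d 0 := by
  set S := {t : ℝ | d t = d 0} with hSdef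
  have hopen : IsOpen S := by
    rw [isOpen_iff_mem_nhds]
    intro a ha
    have hT : IsOpen (d ⁻¹' Set.Ioo (d a - 1) (d a + 1)) :=
      isOpen_Ioo.preimage hc
    have haT : a ∈ d ⁻¹' Set.Ioo (d a - 1) (d a + 1) := by
      simp [Set.mem_preimage]
    refine Filter.mem_of_superset (hT.mem_nhds haT) ?_
    intro b hb
    obtain ⟨m, hm⟩ := hi a
    obtain ⟨n, hn⟩ := hi b
    simp only [Set.mem_preimage, Set.mem_Ioo] at hb
    have : n = m := by
      have h1 : (n : ℝ) < m + 1 := by rw [← hm, ← hn]; linarith [hb.2]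
      have h2 : (m : ℝ) - 1 < n := by rw [← hm, ← hn]; linarith [hb.1]
      have h1' : n < m + 1 := by exact_mod_cast h1
      have h2' : m - 1 < n := by exact_mod_cast (by linarith : (m : ℝ) - 1 < (n:ℝ))
      omega
    have : d b = d a := by rw [hm, hn, this]
    simpa [hSdef] using this.trans ha
  have hclosed : IsClosed S := isClosed_eq hc continuous_const
  have := isClopen_iff.mp ⟨hclosed, hopen⟩
  rcases this with h | h
  · exact absurd (by simp [hSdef] : (0:ℝ) ∈ S) (by simp [h])
  · have : t ∈ S := by rw [h]; trivial
    exact this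

lemma coe_eq_coe_unit {x y : ℝ} (h : (x : UnitAddCircle) = y) : ∃ m : ℤ, y = x + m := by
  rw [QuotientAddGroup.eq] at h
  obtain ⟨m, hm⟩ := h
  refine ⟨m, ?_⟩
  have : (m : ℤ) • (1:ℝ) = -x + y := hm
  simp at this
  linarith

lemma coe_add_int (x : ℝ) (m : ℤ) : ((x + m : ℝ) : UnitAddCircle) = (x : UnitAddCircle) := by
  rw [QuotientAddGroup.eq]
  exact ⟨-m, by simp⟩

lemma norm_coe_le_unit (α : ℝ) : ‖(α : UnitAddCircle)‖ ≤ |α| := by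
  have h := AddCircle.norm_eq (p := (1:ℝ)) (x := α)
  rw [h]
  have h2 := round_le ((1:ℝ)⁻¹ * α) 0
  simp at h2 ⊢
  simpa [abs_sub_comm] using h2

/-- Orbits of a monotone continuous "lift with fixed point" converge to fixed points. -/
lemma orbit_converges {H : ℝ → ℝ} (hmono : Monotone H) (hcont : Continuous H)
    {x₀ : ℝ} (hfix : H x₀ = x₀) (hint : ∀ (x : ℝ) (m : ℤ), H (x + m) = H x + m) (t : ℝ) :
    ∃ s : ℝ, Tendsto (fun n : ℕ => H^[n] t) atTop (𝓝 s) ∧ H s = s := by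
  have hfix' : ∀ m : ℤ, H (x₀ + m) = x₀ + m := fun m => by rw [hint, hfix]
  have hb : ∀ m : ℤ, ∀ n : ℕ, t ≤ x₀ + m → H^[n] t ≤ x₀ + m := by
    intro m n ht
    induction n with
    | zero => simpa using ht
    | succ n ih =>
        rw [Function.iterate_succ_apply']
        calc H (H^[n] t) ≤ H (x₀ + m) := hmono ih
        _ = x₀ + m := hfix' m
  have hb' : ∀ m : ℤ, ∀ n : ℕ, x₀ + m ≤ t → x₀ + m ≤ H^[n] t := by
    intro m n ht
    induction n with
    | zero => simpa using ht
    | succ n ih =>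
        rw [Function.iterate_succ_apply']
        calc x₀ + m = H (x₀ + m) := (hfix' m).symm
        _ ≤ H (H^[n] t) := hmono ih
  have hconv : ∃ s : ℝ, Tendsto (fun n : ℕ => H^[n] t) atTop (𝓝 s) := by
    rcases le_total t (H t) with hle | hle
    · have step : ∀ n : ℕ, H^[n] t ≤ H^[n+1] t := by
        intro n
        induction n with
        | zero => simpa using hle
        | succ n ih =>
            rw [Function.iterate_succ_apply' H n, Function.iterate_succ_apply' H (n+1)]
            exact hmono ih
      have hmonoseq : Monotone fun n : ℕ => H^[n] t := monotone_nat_of_le_succ step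
      have hbdd : BddAbove (Set.range fun n : ℕ => H^[n] t) := by
        refine ⟨x₀ + ⌈t - x₀⌉, ?_⟩
        rintro _ ⟨n, rfl⟩
        exact hb _ n (by linarith [Int.le_ceil (t - x₀)])
      exact ⟨_, tendsto_atTop_ciSup hmonoseq hbdd⟩
    · have step : ∀ n : ℕ, H^[n+1] t ≤ H^[n] t := by
        intro n
        induction n with
        | zero => simpa using hle
        | succ n ih =>
            rw [Function.iterate_succ_apply' H n, Function.iterate_succ_apply' H (n+1)]
            exact hmono ih
      have hmonoseq : Antitone fun n : ℕ => H^[n] t := antitone_nat_of_succ_le step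
      have hbdd : BddBelow (Set.range fun n : ℕ => H^[n] t) := by
        refine ⟨x₀ + ⌊t - x₀⌋, ?_⟩
        rintro _ ⟨n, rfl⟩
        exact hb' _ n (by linarith [Int.floor_le (t - x₀)])
      exact ⟨_, tendsto_atTop_ciInf hmonoseq hbdd⟩
  obtain ⟨s, hs⟩ := hconv
  refine ⟨s, hs, ?_⟩
  have h1 : Tendsto (fun n : ℕ => H^[n+1] t) atTop (𝓝 s) :=
    hs.comp (tendsto_add_atTop_nat 1)
  have h2 : Tendsto (fun n : ℕ => H (H^[n] t)) atTop (𝓝 (H s)) :=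
    (hcont.tendsto s).comp hs
  have : Tendsto (fun n : ℕ => H^[n+1] t) atTop (𝓝 (H s)) := by
    simpa [Function.iterate_succ_apply'] using h2
  exact tendsto_nhds_unique this h1
lemma exists_rat_approx {τ δ : ℝ} (hτ : Irrational τ) (hδ : 0 < δ) :
    ∃ (q : ℕ) (p : ℤ), 1 ≤ q ∧ (q : ℝ) * τ < p ∧ (p : ℝ) < q * τ + δ := by
  set S : AddSubgroup ℝ := AddSubgroup.zmultiples (1:ℝ) ⊔ AddSubgroup.zmultiples τ with hS
  rcases S.dense_or_cyclic with hdense | ⟨a, ha⟩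
  · -- dense case
    have hmin : 0 < min δ 1 := lt_min hδ one_pos
    have hne : (Set.Ioo (0:ℝ) (min δ 1)).Nonempty :=
      ⟨min δ 1 / 2, by linarith, by linarith⟩
    obtain ⟨s, hsIoo, hsS⟩ := hdense.inter_open_nonempty _ isOpen_Ioo hne
    obtain ⟨y, hy, z, hz, hyz⟩ := AddSubgroup.mem_sup.mp hsS
    obtain ⟨a, rfl⟩ := AddSubgroup.mem_zmultiples_iff.mp hy
    obtain ⟨b, rfl⟩ := AddSubgroup.mem_zmultiples_iff.mp hz
    have hys : (a : ℝ) + b * τ = s := by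
      rw [← hyz]; push_cast [zsmul_eq_mul]; ring
    have hs0 : 0 < s := hsIoo.1
    have hsδ : s < δ := lt_of_lt_of_le hsIoo.2 (min_le_left _ _)
    have hs1 : s < 1 := lt_of_lt_of_le hsIoo.2 (min_le_right _ _)
    rcases lt_trichotomy b 0 with hb | hb | hb
    · refine ⟨(-b).toNat, a, ?_, ?_, ?_⟩
      · omega
      · have : ((-b).toNat : ℝ) = (-b : ℤ) := by
          norm_cast; omega
        rw [this]; push_cast; nlinarith [hs0, hys]
      · have : ((-b).toNat : ℝ) = (-b : ℤ) := by norm_cast; omega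
        rw [this]; push_cast; nlinarith [hsδ, hys]
    · exfalso
      subst hb
      have : (a : ℝ) = s := by simpa using hys
      have h0 : 0 < (a:ℝ) := this ▸ hs0
      have h1 : (a:ℝ) < 1 := this ▸ hs1
      have h0' : 0 < a := by exact_mod_cast h0
      have h1' : a < 1 := by exact_mod_cast h1
      omega
    · -- b > 0 : s = a + bτ irrational, use floor trick
      have hirr : Irrational s := by
        rw [← hys]
        exact ((hτ.intCast_mul (by omega : b ≠ 0)).intCast_add a)
      set l : ℤ := ⌊1/s⌋ with hl
      have hl1 : 1 ≤ l := by
        rw [hl, Int.le_floor]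
        rw [le_div_iff₀ hs0]
        push_cast
        linarith
      have hls_le : (l:ℝ) * s ≤ 1 := by
        have := Int.floor_le (1/s)
        rw [← hl] at this
        calc (l:ℝ) * s ≤ (1/s) * s := by nlinarith
        _ = 1 := by field_simp
      have hls_ne : (l:ℝ) * s ≠ 1 := by
        intro h
        have hl0 : (l:ℝ) ≠ 0 := by
          have : l ≠ 0 := by omega
          exact_mod_cast this
        have : s = ((1 / l : ℚ) : ℝ) := by
          push_cast
          field_simp at h ⊢
          linarith
        exact Rat.not_irrational _ (this ▸ hirr)
      have hls_lt : (l:ℝ) * s < 1 := lt_of_le_of_ne hls_le hls_ne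
      have hls_gt : 1 - s < (l:ℝ) * s := by
        have h2 := Int.sub_one_lt_floor (1/s)
        rw [← hl] at h2
        have h3 := mul_lt_mul_of_pos_right h2 hs0
        have h4 : (1/s) * s = 1 := by field_simp
        nlinarith
      refine ⟨(l*b).toNat, -(l*a) + 1, ?_, ?_, ?_⟩
      · have : 1 ≤ l * b := by nlinarith
        omega
      · have hc : ((l*b).toNat : ℝ) = ((l*b : ℤ) : ℝ) := by
          exact_mod_cast congrArg (fun z : ℤ => (z : ℝ)) (Int.toNat_of_nonneg (by nlinarith : (0:ℤ) ≤ l*b))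
        rw [hc]; push_cast
        nlinarith [hys, hls_lt]
      · have hc : ((l*b).toNat : ℝ) = ((l*b : ℤ) : ℝ) := by
          exact_mod_cast congrArg (fun z : ℤ => (z : ℝ)) (Int.toNat_of_nonneg (by nlinarith : (0:ℤ) ≤ l*b))
        rw [hc]; push_cast
        nlinarith [hys, hls_gt, hsδ, hs0]
  · -- cyclic case: contradiction with irrationality
    exfalso
    have h1 : (1:ℝ) ∈ S := AddSubgroup.mem_sup_left (AddSubgroup.mem_zmultiples _)
    have h2 : τ ∈ S := AddSubgroup.mem_sup_right (AddSubgroup.mem_zmultiples _)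
    rw [ha] at h1 h2
    obtain ⟨n, hn⟩ := AddSubgroup.mem_closure_singleton.mp h1
    obtain ⟨m, hm⟩ := AddSubgroup.mem_closure_singleton.mp h2
    rw [zsmul_eq_mul] at hn hm
    have hn0 : (n:ℝ) ≠ 0 := by
      intro h; rw [h, zero_mul] at hn; exact one_ne_zero hn.symm
    have : τ = ((m / n : ℚ) : ℝ) := by
      push_cast
      rw [← hm]
      have ha0 : a = 1 / n := by field_simp; linarith [hn]
      rw [ha0]
      field_simp
    exact Rat.not_irrational _ (this ▸ hτ)

lemma lift_deg_one (f : UnitAddCircle ≃ₜ UnitAddCircle) (F : ℝ ≃ₜ ℝ)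
    (hlift : ∀ t : ℝ, f (t : UnitAddCircle) = ((F t : ℝ) : UnitAddCircle))
    (τ : ℝ) (hτ : Irrational τ)
    (hrot : ∀ t : ℝ, Tendsto (fun n : ℕ => ((F : ℝ → ℝ)^[n] t - t) / n) atTop (𝓝 τ)) :
    (∀ x : ℝ, F (x + 1) = F x + 1) ∧ Monotone (F : ℝ → ℝ) := by
  have hZ : ∀ t : ℝ, ∃ m : ℤ, F (t + 1) - F t = m := by
    intro t
    have e : ((t + 1 : ℝ) : UnitAddCircle) = (t : UnitAddCircle) := by
      simpa using coe_add_int t 1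
    have h2 : ((F (t+1) : ℝ) : UnitAddCircle) = ((F t : ℝ) : UnitAddCircle) := by
      rw [← hlift, ← hlift, e]
    obtain ⟨m, hm⟩ := coe_eq_coe_unit h2
    exact ⟨-m, by push_cast; linarith⟩
  have hdcont : Continuous fun t : ℝ => F (t + 1) - F t :=
    (F.continuous.comp (continuous_id.add continuous_const)).sub F.continuous
  have hconst := cont_int_const hdcont hZ
  obtain ⟨k, hk0⟩ := hZ 0
  have hkt : ∀ t : ℝ, F (t + 1) = F t + k := by
    intro t
    have h1 := hconst t
    rw [hk0] at h1
    linarith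
  have hcol : ∀ u : ℝ, 0 < u → u < 1 → ∀ j : ℤ, F u ≠ F 0 + j := by
    intro u h0 h1 j he
    have h2 : f (u : UnitAddCircle) = f ((0:ℝ) : UnitAddCircle) := by
      rw [hlift, hlift, he, coe_add_int]
    have h3 := f.injective h2
    obtain ⟨m, hm⟩ := coe_eq_coe_unit h3
    have h4 : (0:ℝ) < ((-m : ℤ) : ℝ) := by push_cast; linarith
    have h5 : ((-m : ℤ) : ℝ) < 1 := by push_cast; linarith
    have h4' : (0:ℤ) < -m := by exact_mod_cast h4
    have h5' : (-m : ℤ) < 1 := by exact_mod_cast h5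
    omega
  have hknat : ∀ (t : ℝ) (m : ℕ), F (t + m) = F t + m * k := by
    intro t m
    induction m with
    | zero => simp
    | succ m ih =>
        have e : t + ((m+1 : ℕ) : ℝ) = (t + m) + 1 := by push_cast; ring
        rw [e, hkt, ih]
        push_cast
        ring
  have h1eq : F 1 = F 0 + k := by
    have := hkt 0
    rw [zero_add] at this
    exact this
  have hk1 : k = 1 := by
    by_contra hne
    rcases lt_trichotomy k 0 with hk | hk | hk
    · rcases eq_or_lt_of_le (by omega : k ≤ -1) with hkm1 | hkm2
      · -- k = -1 : F has a fixed point, so τ = 0, contradiction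
        have hkm1' : k = -1 := hkm1
        have hFm : ∀ (t : ℝ) (m : ℕ), F (t + m) = F t - m := by
          intro t m
          have h := hknat t m
          rw [hkm1'] at h
          push_cast at h
          linarith
        set n : ℕ := ⌊|F 0|⌋₊ + 1 with hn
        have hnF : |F 0| < (n:ℝ) := by
          have := Nat.lt_floor_add_one |F 0|
          rw [hn]; push_cast; linarith
        have hFn2 : F ((n:ℕ) : ℝ) = F 0 - n := by
          have := hFm 0 n; rw [zero_add] at this; exact this
        have hFmn : F (-((n:ℕ) : ℝ)) = F 0 + n := by
          have h := hFm (-((n:ℕ) : ℝ)) n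
          simp only [neg_add_cancel] at h
          linarith
        have hψ : ContinuousOn (fun t : ℝ => F t - t) (Set.Icc (-((n:ℕ):ℝ)) n) :=
          (F.continuous.sub continuous_id).continuousOn
        have hn0 : (0:ℝ) ≤ (n:ℝ) := Nat.cast_nonneg n
        have hab : (-((n:ℕ):ℝ)) ≤ (n:ℝ) := by linarith
        have habs1 : F 0 ≤ |F 0| := le_abs_self _
        have habs2 : -(F 0) ≤ |F 0| := neg_le_abs _
        have hmem : (0:ℝ) ∈ Set.Icc (F ((n:ℕ):ℝ) - n) (F (-((n:ℕ):ℝ)) - (-((n:ℕ):ℝ))) := by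
          rw [Set.mem_Icc, hFn2, hFmn]
          constructor <;> linarith
        obtain ⟨u, _, hu⟩ := intermediate_value_Icc' hab hψ hmem
        have hufix : F u = u := by
          simp only at hu
          linarith
        have h1 : Tendsto (fun j : ℕ => ((F : ℝ → ℝ)^[j] u - u) / j) atTop (𝓝 0) := by
          have he : ∀ j : ℕ, ((F : ℝ → ℝ)^[j] u - u) / j = 0 := by
            intro j
            rw [Function.iterate_fixed hufix]
            simp
          simpa [he] using (tendsto_const_nhds : Tendsto (fun _ : ℕ => (0:ℝ)) atTop (𝓝 0))
        have hτ0 := tendsto_nhds_unique (hrot u) h1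
        rw [hτ0] at hτ
        exact Rat.not_irrational 0 (by simpa using hτ)
      · -- k ≤ -2
        have hk2 : (k:ℝ) ≤ -2 := by exact_mod_cast (by omega : k ≤ -2)
        have hmem : F 0 + ((-1 : ℤ) : ℝ) ∈ Set.Ioo (F 1) (F 0) := by
          rw [h1eq]
          constructor <;> (push_cast; linarith)
        obtain ⟨u, huI, hu⟩ := intermediate_value_Ioo' (by norm_num : (0:ℝ) ≤ 1)
          F.continuous.continuousOn hmem
        exact hcol u huI.1 huI.2 (-1) hu
    · -- k = 0
      have h2 : F 1 = F 0 := by rw [h1eq, hk]; simp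
      have := F.injective h2
      norm_num at this
    · -- k ≥ 2
      have hk2 : (2:ℝ) ≤ (k:ℝ) := by exact_mod_cast (by omega : 2 ≤ k)
      have hmem : F 0 + ((1 : ℤ) : ℝ) ∈ Set.Ioo (F 0) (F 1) := by
        rw [h1eq]
        constructor <;> (push_cast; linarith)
      obtain ⟨u, huI, hu⟩ := intermediate_value_Ioo (by norm_num : (0:ℝ) ≤ 1)
        F.continuous.continuousOn hmem
      exact hcol u huI.1 huI.2 1 hu
  have hadd1 : ∀ x : ℝ, F (x + 1) = F x + 1 := by
    intro x; rw [hkt, hk1]; push_cast; ring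
  refine ⟨hadd1, ?_⟩
  have haddn : ∀ (t : ℝ) (m : ℕ), F (t + m) = F t + m := by
    intro t m
    have h := hknat t m
    rw [hk1] at h
    push_cast at h
    simpa using h
  intro x y hxy
  rcases eq_or_lt_of_le hxy with rfl | hlt
  · exact le_rfl
  set n : ℕ := ⌈y - x⌉₊ + 1 with hn
  have hn1 : (1:ℝ) ≤ (n:ℝ) := by
    rw [hn]; push_cast; linarith [Nat.cast_nonneg (α := ℝ) ⌈y - x⌉₊]
  have hyn : y ≤ x + n := by
    have h := Nat.le_ceil (y - x)
    rw [hn]; push_cast; linarith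
  have hxn : x ≤ x + (n:ℝ) := by linarith
  rcases ContinuousOn.strictMonoOn_of_injOn_Icc' hxn F.continuous.continuousOn
      (F.injective.injOn) with hm | ha
  · exact (hm (Set.left_mem_Icc.mpr hxn) ⟨hxy, hyn⟩ hlt).le
  · exfalso
    have h1 : x < x + (n:ℝ) := by linarith
    have h2 := ha (Set.left_mem_Icc.mpr hxn) (Set.right_mem_Icc.mpr hxn) h1
    rw [haddn x n] at h2
    linarith

open CircleDeg1Lift in
lemma exists_alpha_fixed (F : ℝ ≃ₜ ℝ) (hadd : ∀ x : ℝ, F (x + 1) = F x + 1)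
    (hmono : Monotone (F : ℝ → ℝ)) (τ : ℝ)
    (hτF : Tendsto (fun n : ℕ => ((F : ℝ → ℝ)^[n] 0 - 0) / n) atTop (𝓝 τ))
    {δ : ℝ} (hδ : 0 < δ) {q : ℕ} {p : ℤ} (hq : 1 ≤ q)
    (h1 : (q : ℝ) * τ < p) (h2 : (p : ℝ) < q * τ + δ) :
    ∃ α ∈ Set.Icc (0:ℝ) δ, ∃ x₀ : ℝ, ((fun x => F x + α)^[q]) x₀ = x₀ + p := by
  -- the family of lifts
  set G : ℝ → ℝ → ℝ := fun α x => F x + α with hG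
  have hGmono : ∀ α, Monotone (G α) := fun α a b hab => by
    simp only [hG]; linarith [hmono hab]
  have hGadd : ∀ α x, G α (x + 1) = G α x + 1 := by
    intro α x; simp only [hG]; rw [hadd]; ring
  set Gl : ℝ → CircleDeg1Lift := fun α => ⟨⟨G α, hGmono α⟩, hGadd α⟩ with hGl
  have hGlcoe : ∀ α, ⇑(Gl α) = G α := fun α => rfl
  have hGlpow : ∀ α, ⇑(Gl α ^ q) = (G α)^[q] := by
    intro α
    rw [CircleDeg1Lift.coe_pow, hGlcoe]
  set Fl : CircleDeg1Lift := ⟨⟨F, hmono⟩, fun x => hadd x⟩ with hFl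
  have hFlcoe : ⇑Fl = ⇑F := rfl
  have hτFl : CircleDeg1Lift.translationNumber Fl = τ := by
    apply CircleDeg1Lift.translationNumber_eq_of_tendsto₀
    simpa [hFlcoe] using hτF
  have hGl0 : Gl 0 = Fl := by
    apply CircleDeg1Lift.ext
    intro x
    simp [hGlcoe, hG, hFlcoe]
  -- joint continuity in the parameter
  have hiter_cont : ∀ (x : ℝ) (n : ℕ), Continuous fun α => (G α)^[n] x := by
    intro x n
    induction n with
    | zero => simpa using continuous_const
    | succ n ih =>
        have e : (fun α => (G α)^[n+1] x) = fun α => F ((G α)^[n] x) + α := by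
          funext α
          rw [Function.iterate_succ_apply']
        rw [e]
        exact (F.continuous.comp ih).add continuous_id
  set U : Set ℝ := {α : ℝ | ∃ x : ℝ, (G α)^[q] x < x + p} with hU
  set V : Set ℝ := {α : ℝ | ∃ x : ℝ, x + p < (G α)^[q] x} with hV
  have hUopen : IsOpen U := by
    have : U = ⋃ x : ℝ, {α : ℝ | (G α)^[q] x < x + p} := by
      ext α; simp [hU, Set.mem_iUnion]
    rw [this]
    exact isOpen_iUnion fun x => isOpen_lt (hiter_cont x q) continuous_const
  have hVopen : IsOpen V := by
    have : V = ⋃ x : ℝ, {α : ℝ | x + p < (G α)^[q] x} := by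
      ext α; simp [hV, Set.mem_iUnion]
    rw [this]
    exact isOpen_iUnion fun x => isOpen_lt continuous_const (hiter_cont x q)
  have h0U : (0:ℝ) ∈ U := by
    by_contra h
    simp only [hU, Set.mem_setOf_eq, not_exists, not_lt] at h
    have h0 : (0:ℝ) + p ≤ (Gl 0 ^ q) 0 := by
      rw [hGlpow]; exact h 0
    have := CircleDeg1Lift.le_translationNumber_of_add_int_le _ h0
    rw [CircleDeg1Lift.translationNumber_pow, hGl0, hτFl] at this
    linarith
  have hδV : δ ∈ V := by
    by_contra h
    simp only [hV, Set.mem_setOf_eq, not_exists, not_lt] at h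
    -- lower bound : F^[q] x + δ ≤ (G δ)^[q] x
    have hcmp : ∀ (n : ℕ) (x : ℝ), (F : ℝ → ℝ)^[n] x ≤ (G δ)^[n] x := by
      intro n
      induction n with
      | zero => intro x; simp
      | succ n ih =>
          intro x
          rw [Function.iterate_succ_apply', Function.iterate_succ_apply']
          calc F ((F : ℝ → ℝ)^[n] x) ≤ F ((G δ)^[n] x) := hmono (ih x)
          _ ≤ F ((G δ)^[n] x) + δ := by linarith
    have hlb : ∀ x : ℝ, (F : ℝ → ℝ)^[q] x + δ ≤ (G δ)^[q] x := by
      intro x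
      obtain ⟨m, rfl⟩ : ∃ m : ℕ, q = m + 1 := ⟨q - 1, by omega⟩
      rw [Function.iterate_succ_apply', Function.iterate_succ_apply']
      have : F ((F : ℝ → ℝ)^[m] x) ≤ F ((G δ)^[m] x) := hmono (hcmp m x)
      simp only [hG]
      linarith
    have hub : ∀ x : ℝ, (Fl ^ q) x ≤ x + ((p : ℝ) - δ) := by
      intro x
      have h3 := h x
      have h4 := hlb x
      rw [CircleDeg1Lift.coe_pow, hFlcoe]
      linarith
    have := CircleDeg1Lift.translationNumber_le_of_le_add _ hub
    rw [CircleDeg1Lift.translationNumber_pow, hτFl] at this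
    linarith
  by_contra hno
  push_neg at hno
  have hsub : Set.Icc (0:ℝ) δ ⊆ U ∪ V := by
    intro α hα
    rcases lt_trichotomy ((G α)^[q] 0) ((0:ℝ) + p) with hlt | heq | hgt
    · exact Or.inl ⟨0, hlt⟩
    · exact absurd heq (by
        intro hc
        exact absurd hc (by
          have := hno α hα 0
          exact this))
    · exact Or.inr ⟨0, hgt⟩
  have hdisj : ∀ α ∈ Set.Icc (0:ℝ) δ, α ∉ U ∩ V := by
    rintro α hα ⟨⟨x₁, hx₁⟩, ⟨x₂, hx₂⟩⟩
    set c : ℝ → ℝ := fun x => (G α)^[q] x - (x + p) with hc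
    have hccont : Continuous c := by
      have hGcont : Continuous (G α) := F.continuous.add continuous_const
      exact (hGcont.iterate q).sub (continuous_id.add continuous_const)
    have h0mem : (0:ℝ) ∈ Set.uIcc (c x₁) (c x₂) := by
      apply Set.mem_uIcc.mpr
      left
      constructor
      · simp only [hc]; linarith
      · simp only [hc]; linarith
    obtain ⟨x₀, _, hx₀⟩ := intermediate_value_uIcc hccont.continuousOn h0mem
    apply hno α hα x₀
    simp only [hc] at hx₀
    linarith
  obtain ⟨α, hαI, hαUV⟩ := isPreconnected_Icc U V hUopen hVopen hsub
    ⟨0, ⟨le_rfl, hδ.le⟩, h0U⟩ ⟨δ, ⟨hδ.le, le_rfl⟩, hδV⟩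
  exact hdisj α hαI hαUV

/-- A circle homeomorphism with irrational rotation number is not `μ`-topologically
stable for any Borel probability measure `μ`. Here the circle is `ℝ/ℤ`, the projection
`P : ℝ → ℝ/ℤ` is the natural quotient map, `F` is a lift of `f`, and the rotation number
`τ` is the limit of `(Fⁿ(t) - t)/n`. -/
theorem no_muTopStable_of_irrational_rotation_number
    (f : UnitAddCircle ≃ₜ UnitAddCircle) (F : ℝ ≃ₜ ℝ)
    (hlift : ∀ t : ℝ, f (t : UnitAddCircle) = ((F t : ℝ) : UnitAddCircle))
    (τ : ℝ) (hτ : Irrational τ)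
    (hrot : ∀ t : ℝ, Filter.Tendsto (fun n : ℕ => ((F : ℝ → ℝ)^[n] t - t) / n)
      Filter.atTop (nhds τ))
    (μ : Measure UnitAddCircle) [IsProbabilityMeasure μ] :
    ¬ MuTopStable μ (f : UnitAddCircle → UnitAddCircle) := by
  intro hstab
  obtain ⟨hadd, hmono⟩ := lift_deg_one f F hlift τ hτ hrot
  obtain ⟨δ, hδpos, hδ⟩ := hstab (1/2) (by norm_num)
  obtain ⟨q, p, hq, h1, h2⟩ := exists_rat_approx hτ hδpos
  obtain ⟨α, hαI, x₀, hx₀⟩ := exists_alpha_fixed F hadd hmono τ (hrot 0) hδpos hq h1 h2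
  set G : ℝ → ℝ := fun x => F x + α with hGdef
  set g : UnitAddCircle → UnitAddCircle := fun z => f z + ((α : ℝ) : UnitAddCircle) with hgdef
  have hgcont : Continuous g := f.continuous.add continuous_const
  have hgdist : ∀ z, dist (f z) (g z) ≤ δ := by
    intro z
    have e1 : dist (f z) (g z) = ‖((α : ℝ) : UnitAddCircle)‖ := dist_self_add_right _ _
    rw [e1]
    calc ‖((α : ℝ) : UnitAddCircle)‖ ≤ |α| := norm_coe_le_unit α
    _ = α := abs_of_nonneg hαI.1
    _ ≤ δ := hαI.2
  obtain ⟨Y, hgY, hYcomp, hYmeas, h, hhcont, hhdist, hhconj⟩ := hδ g hgcont hgdist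
  -- Y is nonempty
  have hYne : Y.Nonempty := by
    rw [Set.nonempty_iff_ne_empty]
    rintro rfl
    rw [Set.compl_empty, measure_univ] at hYmeas
    have hlt : ENNReal.ofReal (1/2) < 1 := by
      rw [ENNReal.ofReal_lt_one]
      norm_num
    exact absurd hYmeas (not_le.mpr hlt)
  obtain ⟨y₀, hy₀⟩ := hYne
  obtain ⟨t₀, ht₀⟩ := QuotientAddGroup.mk_surjective y₀
  -- lifted dynamics
  have hglift : ∀ t : ℝ, g ((t : ℝ) : UnitAddCircle) = ((G t : ℝ) : UnitAddCircle) := by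
    intro t
    show f (t : UnitAddCircle) + ((α : ℝ) : UnitAddCircle) = ((F t + α : ℝ) : UnitAddCircle)
    rw [hlift t]
    rfl
  have hgiter : ∀ (n : ℕ) (t : ℝ),
      g^[n] ((t : ℝ) : UnitAddCircle) = ((G^[n] t : ℝ) : UnitAddCircle) := by
    intro n
    induction n with
    | zero => intro t; simp
    | succ n ih =>
        intro t
        rw [Function.iterate_succ_apply', Function.iterate_succ_apply', ih, hglift]
  have hfiter : ∀ (n : ℕ) (t : ℝ),
      f^[n] ((t : ℝ) : UnitAddCircle) = (((F : ℝ → ℝ)^[n] t : ℝ) : UnitAddCircle) := by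
    intro n
    induction n with
    | zero => intro t; simp
    | succ n ih =>
        intro t
        rw [Function.iterate_succ_apply', Function.iterate_succ_apply', ih, hlift]
  -- the lift of g as a CircleDeg1Lift, and its q-th iterate H (normalized)
  have hGmono : Monotone G := fun a b hab => by
    show F a + α ≤ F b + α; linarith [hmono hab]
  have hGadd : ∀ x, G (x + 1) = G x + 1 := by
    intro x
    show F (x + 1) + α = F x + α + 1
    rw [hadd]; ring
  set Gl : CircleDeg1Lift := ⟨⟨G, hGmono⟩, hGadd⟩ with hGl
  have hGlq : ⇑(Gl ^ q) = G^[q] := by rw [CircleDeg1Lift.coe_pow]; rfl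
  have hGq_int : ∀ (x : ℝ) (m : ℤ), G^[q] (x + m) = G^[q] x + m := by
    intro x m
    have := (Gl ^ q).map_add_int x m
    rwa [hGlq] at this
  have hGqmono : Monotone (G^[q]) := by
    have := (Gl ^ q).monotone
    rwa [hGlq] at this
  set H : ℝ → ℝ := fun x => G^[q] x - p with hHdef
  have hHmono : Monotone H := fun a b hab => by
    simp only [hHdef]
    exact sub_le_sub_right (hGqmono hab) _
  have hHcont : Continuous H :=
    ((F.continuous.add continuous_const).iterate q).sub continuous_const
  have hHfix : H x₀ = x₀ := by
    simp only [hHdef]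
    rw [hx₀]
    ring
  have hHint : ∀ (x : ℝ) (m : ℤ), H (x + m) = H x + m := by
    intro x m
    simp only [hHdef]
    rw [hGq_int]
    ring
  obtain ⟨s, hsconv, hsfix⟩ := orbit_converges hHmono hHcont hHfix hHint t₀
  have hGqH : ∀ x : ℝ, G^[q] x = H x + p := by
    intro x
    simp only [hHdef]
    ring
  -- relate iterates of G^[q] to iterates of H
  have hrel : ∀ n : ℕ, (G^[q])^[n] t₀ = H^[n] t₀ + ((n * p : ℤ) : ℝ) := by
    intro n
    induction n with
    | zero => simp
    | succ n ih =>
        rw [Function.iterate_succ_apply', Function.iterate_succ_apply', ih]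
        have e : H^[n] t₀ + ((n * p : ℤ) : ℝ) = H^[n] t₀ + ((n * p : ℤ) : ℝ) := rfl
        rw [show (H^[n] t₀ + ((n * p : ℤ) : ℝ)) = (H^[n] t₀ + ((n * p : ℤ) : ℤ)) by push_cast; ring]
        rw [hGq_int, hGqH]
        push_cast
        ring
  -- the limit point z is in Y and is g-periodic
  set z : UnitAddCircle := ((s : ℝ) : UnitAddCircle) with hz
  have hmemY : ∀ n : ℕ, g^[q * n] y₀ ∈ Y := fun n => (hgY.iterate (q * n)) hy₀
  have hval : ∀ n : ℕ, g^[q * n] y₀ = ((H^[n] t₀ : ℝ) : UnitAddCircle) := by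
    intro n
    rw [← ht₀, hgiter (q * n) t₀, Function.iterate_mul, hrel n, coe_add_int]
  have htends : Filter.Tendsto (fun n : ℕ => g^[q * n] y₀) Filter.atTop (nhds z) := by
    rw [show (fun n : ℕ => g^[q * n] y₀) = fun n : ℕ => ((H^[n] t₀ : ℝ) : UnitAddCircle) from
      funext hval]
    exact ((AddCircle.continuous_mk' (p := (1:ℝ))).tendsto s).comp hsconv
  have hzY : z ∈ Y :=
    hYcomp.isClosed.mem_of_tendsto htends (Filter.Eventually.of_forall hmemY)
  have hper : g^[q] z = z := by
    rw [hz, hgiter q s, hGqH, coe_add_int, hsfix]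
  -- push the periodic point through the semiconjugacy h
  set gY : Y → Y := fun y => ⟨g y, hgY y.2⟩ with hgYdef
  have hiterconj : ∀ (n : ℕ) (y : Y), f^[n] (h y) = h (gY^[n] y) := by
    intro n
    induction n with
    | zero => intro y; simp
    | succ n ih =>
        intro y
        rw [Function.iterate_succ_apply', Function.iterate_succ_apply', ih, hhconj]
  have hgYcoe : ∀ (n : ℕ) (y : Y), ((gY^[n] y : Y) : UnitAddCircle) = g^[n] (y : UnitAddCircle) := by
    intro n
    induction n with
    | zero => intro y; simp
    | succ n ih =>
        intro y
        rw [Function.iterate_succ_apply', Function.iterate_succ_apply', ← ih]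
  set zY : Y := ⟨z, hzY⟩ with hzY'
  have hfixY : gY^[q] zY = zY := by
    apply Subtype.ext
    rw [hgYcoe q zY]
    exact hper
  set w : UnitAddCircle := h zY with hw
  have hwper : f^[q] w = w := by
    rw [hw, hiterconj q zY, hfixY]
  -- f has no periodic point: contradiction with irrationality
  obtain ⟨s', hs'⟩ := QuotientAddGroup.mk_surjective w
  have hcoe : (((F : ℝ → ℝ)^[q] s' : ℝ) : UnitAddCircle) = ((s' : ℝ) : UnitAddCircle) := by
    rw [← hfiter q s']
    show f^[q] ((s' : ℝ) : UnitAddCircle) = ((s' : ℝ) : UnitAddCircle)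
    have : ((s' : ℝ) : UnitAddCircle) = w := hs'
    rw [this, hwper]
  obtain ⟨m, hm⟩ := coe_eq_coe_unit hcoe
  set Fl : CircleDeg1Lift := ⟨⟨F, hmono⟩, fun x => hadd x⟩ with hFl
  have hτFl : CircleDeg1Lift.translationNumber Fl = τ := by
    apply CircleDeg1Lift.translationNumber_eq_of_tendsto₀
    simpa [show ⇑Fl = ⇑F from rfl] using hrot 0
  have hFlq : (Fl ^ q) s' = s' + ((-m : ℤ) : ℝ) := by
    rw [CircleDeg1Lift.coe_pow]
    show (F : ℝ → ℝ)^[q] s' = s' + ((-m : ℤ) : ℝ)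
    push_cast
    linarith
  have hτq := CircleDeg1Lift.translationNumber_of_eq_add_int _ hFlq
  rw [CircleDeg1Lift.translationNumber_pow, hτFl] at hτq
  have hq0 : (q : ℝ) ≠ 0 := by
    have : (1:ℝ) ≤ q := by exact_mod_cast hq
    linarith
  have hτrat : τ = (((-m : ℚ) / (q : ℚ) : ℚ) : ℝ) := by
    push_cast at hτq ⊢
    field_simp
    linarith
  exact Rat.not_irrational _ (hτrat ▸ hτ)
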